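/- For the constrained scalar–fluid system with γ = 0, the fluid point M = (0,0) has Jacobian diag(0, -3), and the local centre manifold through M is tangent to the X-axis with graph Y = (a/3)X² + O(X⁴); the reduced dynamics on the centre manifold is X' = -(a²/3)X³ + O(X⁵). -/

import Mathlib

open Asymptotics

lemma aux_bigO (g : ℝ → ℝ) (hg : Continuous g) (n : ℕ) :
    (fun X : ℝ => g X * X ^ n) =O[nhds 0] (fun X : ℝ => X ^ n) := by
  have h1 : g =O[nhds (0:ℝ)] (fun _ => (1:ℝ)) :=
    (hg.continuousAt (x := 0)).tendsto.isBigO_one ℝ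
  simpa using h1.mul (isBigO_refl (fun X : ℝ => X ^ n) (nhds 0))

/-- For γ = 0: at M = (0,0) the Jacobian is diag(0,-3); the graph Y = (a/3)X² satisfies
the centre-manifold invariance equation up to O(X⁴); and the reduced dynamics on it is
X' = -(a²/3)X³ + O(X⁵). -/
theorem stmt6 (a : ℝ) :
    HasFDerivAt (fun p : ℝ × ℝ => (p.1*(3*p.2^2 - a*p.2), -3*p.2 + a*p.1^2 + 3*p.2^3))
      (ContinuousLinearMap.prod ((0:ℝ) • ContinuousLinearMap.fst ℝ ℝ ℝ)
        ((-3:ℝ) • ContinuousLinearMap.snd ℝ ℝ ℝ)) ((0:ℝ), (0:ℝ)) ∧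
    (fun X : ℝ => ((2*a/3)*X) * (X*(3*((a/3)*X^2)^2 - a*((a/3)*X^2))) -
        (-3*((a/3)*X^2) + a*X^2 + 3*((a/3)*X^2)^3)) =O[nhds 0] (fun X : ℝ => X^4) ∧
    (fun X : ℝ => X*(3*((a/3)*X^2)^2 - a*((a/3)*X^2)) - (-(a^2/3)*X^3))
      =O[nhds 0] (fun X : ℝ => X^5) := by
  refine ⟨?_, ?_, ?_⟩
  · have hfst := hasFDerivAt_fst (𝕜 := ℝ) (p := ((0:ℝ),(0:ℝ)))
    have hsnd := hasFDerivAt_snd (𝕜 := ℝ) (p := ((0:ℝ),(0:ℝ)))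
    have h1 : HasFDerivAt (fun p : ℝ × ℝ => p.1*(3*p.2^2 - a*p.2))
        ((0:ℝ) • ContinuousLinearMap.fst ℝ ℝ ℝ) ((0:ℝ),(0:ℝ)) := by
      have key := hfst.mul ((((hsnd.mul hsnd)).const_mul 3).sub (hsnd.const_mul a))
      have heq : (fun p : ℝ × ℝ => p.1*(3*p.2^2 - a*p.2)) =
          (fun p : ℝ × ℝ => p.1*(3*(p.2*p.2) - a*p.2)) := by funext p; ring
      rw [heq]
      refine key.congr_fderiv ?_
      ext <;> simp
    have h2 : HasFDerivAt (fun p : ℝ × ℝ => -3*p.2 + a*p.1^2 + 3*p.2^3)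
        ((-3:ℝ) • ContinuousLinearMap.snd ℝ ℝ ℝ) ((0:ℝ),(0:ℝ)) := by
      have key := ((hsnd.const_mul (-3)).add (((hfst.mul hfst)).const_mul a)).add
        (((hsnd.mul (hsnd.mul hsnd))).const_mul 3)
      have heq : (fun p : ℝ × ℝ => -3*p.2 + a*p.1^2 + 3*p.2^3) =
          (fun p : ℝ × ℝ => -3*p.2 + a*(p.1*p.1) + 3*(p.2*(p.2*p.2))) := by funext p; ring
      rw [heq]
      refine key.congr_fderiv ?_
      ext <;> simp
    exact h1.prodMk h2
  · have := aux_bigO (fun X : ℝ => a^3/9*X^2 - 2*a^3/9) (by continuity) 4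
    refine this.congr' ?_ (Filter.EventuallyEq.refl _ _)
    filter_upwards with X
    ring
  · have := aux_bigO (fun _ : ℝ => a^2/3) (by continuity) 5
    refine this.congr' ?_ (Filter.EventuallyEq.refl _ _)
    filter_upwards with X
    ring
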